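/- Top-k robustness is not monotone in k: there exists a function f : ℝ → ℝ^3 (three logits on a one-dimensional input), a point x, and ε > 0, such that f is top-1 ε-locally-robust at x but not top-2 ε-locally-robust at x. -/

import Mathlib

/-- `Fk f k x` is the set of classes achieving the `k` highest logit values of
`f` at `x`. -/
noncomputable def Fk {E : Type*} {m : ℕ} (f : E → Fin m → ℝ) (k : ℕ) (x : E) : Finset (Fin m) :=
  Finset.univ.filter fun j => (Finset.univ.filter fun i => f x j ≤ f x i).card ≤ k

/-- The counterexample function. -/
noncomputable def gFun : ℝ → Fin 3 → ℝ := fun z => if z ≤ 0 then ![10,1,2] else ![10,2,1]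

lemma fk_vec (v : Fin 3 → ℝ) (k : ℕ) (z : ℝ) (f : ℝ → Fin 3 → ℝ) (hf : f z = v) :
    Fk f k z = Finset.univ.filter fun j => (Finset.univ.filter fun i => v j ≤ v i).card ≤ k := by
  simp [Fk, hf]

lemma gFun_le {z : ℝ} (hz : z ≤ 0) : gFun z = ![10,1,2] := if_pos hz

lemma gFun_gt {z : ℝ} (hz : ¬ z ≤ 0) : gFun z = ![10,2,1] := if_neg hz

lemma fk1_g (z : ℝ) : Fk gFun 1 z = {0} := by
  by_cases hz : z ≤ 0
  · rw [fk_vec ![10,1,2] 1 z gFun (gFun_le hz)]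
    ext j
    simp only [Finset.mem_filter, Finset.mem_univ, true_and, Finset.mem_singleton,
      Finset.card_filter, Fin.sum_univ_three]
    fin_cases j <;> norm_num [Matrix.cons_val_two] <;> decide
  · rw [fk_vec ![10,2,1] 1 z gFun (gFun_gt hz)]
    ext j
    simp only [Finset.mem_filter, Finset.mem_univ, true_and, Finset.mem_singleton,
      Finset.card_filter, Fin.sum_univ_three]
    fin_cases j <;> norm_num [Matrix.cons_val_two] <;> decide

lemma fk2_g0 : Fk gFun 2 0 = {0, 2} := by
  rw [fk_vec ![10,1,2] 2 0 gFun (gFun_le le_rfl)]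
  ext j
  simp only [Finset.mem_filter, Finset.mem_univ, true_and, Finset.mem_insert,
    Finset.mem_singleton, Finset.card_filter, Fin.sum_univ_three]
  fin_cases j <;> norm_num [Matrix.cons_val_two] <;> decide

lemma fk2_g1 : Fk gFun 2 1 = {0, 1} := by
  rw [fk_vec ![10,2,1] 2 1 gFun (gFun_gt (by norm_num))]
  ext j
  simp only [Finset.mem_filter, Finset.mem_univ, true_and, Finset.mem_insert,
    Finset.mem_singleton, Finset.card_filter, Fin.sum_univ_three]
  fin_cases j <;> norm_num [Matrix.cons_val_two] <;> decide

/-- Top-k robustness is not monotone in `k`: there is a three-logit function on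
a one-dimensional input (with pairwise distinct logits everywhere, so each
`Fᵏ` has exactly `k` elements), a point `x` and `ε > 0`, such that `f` is
top-1 `ε`-locally-robust at `x` but not top-2 `ε`-locally-robust at `x`. -/
theorem topk_not_monotone :
    ∃ (f : ℝ → Fin 3 → ℝ) (x ε : ℝ), 0 < ε ∧
      (∀ z (i j : Fin 3), i ≠ j → f z i ≠ f z j) ∧
      (∀ x', ‖x - x'‖ ≤ ε → Fk f 1 x = Fk f 1 x') ∧
      ¬ (∀ x', ‖x - x'‖ ≤ ε → Fk f 2 x = Fk f 2 x') := by
  refine ⟨gFun, 0, 1, one_pos, ?_, ?_, ?_⟩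
  · intro z i j hij
    by_cases hz : z ≤ 0
    · rw [gFun_le hz]; fin_cases i <;> fin_cases j <;> simp_all <;> norm_num
    · rw [gFun_gt hz]; fin_cases i <;> fin_cases j <;> simp_all <;> norm_num
  · intro x' _
    rw [fk1_g, fk1_g]
  · intro h
    have h1 := h 1 (by norm_num)
    rw [fk2_g0, fk2_g1] at h1
    have : (2 : Fin 3) ∈ ({0, 1} : Finset (Fin 3)) := h1 ▸ by decide
    exact absurd this (by decide)
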